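/- Let $\{A_i\}_{i\in I}$ be a filtered direct system of commutative rings with direct limit $A$, and let $u_i : A_i \to A$ denote the canonical ring homomorphisms. If $E$ is a finitely presented (commutative) $A$-algebra, then there exists an index $i_0 \in I$ and a finitely presented $A_{i_0}$-algebra $E_{i_0}$ such that the base change $A \otimes_{A_{i_0}} E_{i_0}$ (along $u_{i_0}$) is isomorphic to $E$ as an $A$-algebra. -/

import Mathlib

open TensorProduct

/-- `B`, together with the canonical maps `u i : A i →+* B`, is the direct limit
(filtered colimit) of the filtered direct system of commutative rings
`{A i, f i j : A i →+* A j (i ≤ j)}` indexed by the directed set `I`. -/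
structure IsFilteredRingColimit {I : Type*} [Preorder I]
    (A : I → Type*) [∀ i, CommRing (A i)]
    (f : ∀ i j, i ≤ j → (A i →+* A j))
    (B : Type*) [CommRing B] (u : ∀ i, A i →+* B) : Prop where
  directed : ∀ i j : I, ∃ k, i ≤ k ∧ j ≤ k
  map_self : ∀ i (x : A i), f i i le_rfl x = x
  map_map : ∀ (i j k : I) (hij : i ≤ j) (hjk : j ≤ k) (x : A i),
    f j k hjk (f i j hij x) = f i k (hij.trans hjk) x
  compat : ∀ i j (h : i ≤ j) (x : A i), u j (f i j h x) = u i x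
  exhaust : ∀ b : B, ∃ (i : I) (x : A i), u i x = b
  eq_stage : ∀ i (x y : A i), u i x = u i y → ∃ (j : I) (h : i ≤ j), f i j h x = f i j h y


set_option maxHeartbeats 1000000 in
set_option synthInstance.maxHeartbeats 400000 in
/-- **Reduction of finitely presented algebras to a finite stage.**
Let `{A i}` be a filtered direct system of commutative rings with direct limit `B`,
with canonical homomorphisms `u i : A i →+* B`.  If `E` is a finitely presented
(commutative) `B`-algebra, then there exist an index `i₀` and a finitely presented
`A i₀`-algebra `E₀` such that the base change `B ⊗[A i₀] E₀` (along `u i₀`) is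
isomorphic to `E` as a `B`-algebra. -/
theorem finitePresentation_algebra_descends_to_finite_stage
    {I : Type} [Preorder I] (A : I → Type) [∀ i, CommRing (A i)]
    (f : ∀ i j, i ≤ j → (A i →+* A j))
    (B : Type) [CommRing B] (u : ∀ i, A i →+* B)
    (hcolim : IsFilteredRingColimit A f B u)
    (E : Type) [CommRing E] [Algebra B E] [Algebra.FinitePresentation B E] :
    ∃ (i₀ : I) (E₀ : Type) (_ : CommRing E₀) (_ : Algebra (A i₀) E₀),
      Algebra.FinitePresentation (A i₀) E₀ ∧
      Nonempty (letI := (u i₀).toAlgebra; (B ⊗[A i₀] E₀) ≃ₐ[B] E) := by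
  classical
  obtain ⟨n, φ, hφ, hker⟩ := Algebra.FinitePresentation.out (R := B) (A := E)
  obtain ⟨s, hs⟩ := hker
  -- `I` is nonempty and directed
  obtain ⟨iw, -, -⟩ := hcolim.exhaust 0
  haveI : Nonempty I := ⟨iw⟩
  haveI : IsDirected I (· ≤ ·) := ⟨hcolim.directed⟩
  -- every polynomial over `B` lifts to some finite stage
  have lemA : ∀ p : MvPolynomial (Fin n) B,
      ∃ (i : I) (q : MvPolynomial (Fin n) (A i)), MvPolynomial.map (u i) q = p := by
    intro p
    induction p using MvPolynomial.induction_on' with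
    | monomial m b =>
      obtain ⟨i, x, hx⟩ := hcolim.exhaust b
      exact ⟨i, MvPolynomial.monomial m x, by simp [hx]⟩
    | add p q hp hq =>
      obtain ⟨i, p', hp'⟩ := hp
      obtain ⟨j, q', hq'⟩ := hq
      obtain ⟨k, hik, hjk⟩ := hcolim.directed i j
      refine ⟨k, (MvPolynomial.map (f i k hik) p') + (MvPolynomial.map (f j k hjk) q'), ?_⟩
      have h1 : (u k).comp (f i k hik) = u i := RingHom.ext fun x => hcolim.compat i k hik x
      have h2 : (u k).comp (f j k hjk) = u j := RingHom.ext fun x => hcolim.compat j k hjk x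
      rw [map_add, MvPolynomial.map_map, MvPolynomial.map_map, h1, h2, hp', hq']
  -- choose lifts for the finitely many generators and a common stage
  choose ι q hq using fun p : {p : MvPolynomial (Fin n) B // p ∈ s} => lemA p
  obtain ⟨i₀, hi₀⟩ := Finset.exists_le (Finset.univ.image ι)
  have hle : ∀ p, ι p ≤ i₀ := fun p =>
    hi₀ _ (Finset.mem_image_of_mem ι (Finset.mem_univ p))
  set Q : {p : MvPolynomial (Fin n) B // p ∈ s} → MvPolynomial (Fin n) (A i₀) :=
    fun p => MvPolynomial.map (f (ι p) i₀ (hle p)) (q p) with hQdef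
  have hQ : ∀ p, MvPolynomial.map (u i₀) (Q p) = (p : MvPolynomial (Fin n) B) := by
    intro p
    have h1 : (u i₀).comp (f (ι p) i₀ (hle p)) = u (ι p) :=
      RingHom.ext fun x => hcolim.compat (ι p) i₀ (hle p) x
    rw [hQdef, MvPolynomial.map_map, h1, hq]
  set J : Ideal (MvPolynomial (Fin n) (A i₀)) := Ideal.span (Set.range Q) with hJdef
  refine ⟨i₀, MvPolynomial (Fin n) (A i₀) ⧸ J, inferInstance, inferInstance, ?_, ?_⟩
  · exact Algebra.FinitePresentation.quotient (Submodule.fg_span (Set.finite_range Q))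
  -- now construct the isomorphism
  letI : Algebra (A i₀) B := (u i₀).toAlgebra
  letI : Algebra (A i₀) E := ((algebraMap B E).comp (u i₀)).toAlgebra
  haveI : IsScalarTower (A i₀) B E := IsScalarTower.of_algebraMap_eq' rfl
  have humap : algebraMap (A i₀) B = u i₀ := rfl
  -- the map `MvPolynomial (Fin n) (A i₀) → E`
  set ψ₀ : MvPolynomial (Fin n) (A i₀) →ₐ[A i₀] E :=
    (φ.restrictScalars (A i₀)).comp (MvPolynomial.mapAlgHom (Algebra.ofId (A i₀) B))
    with hψ₀def
  have hψ₀ : ∀ r, ψ₀ r = φ (MvPolynomial.map (u i₀) r) := by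
    intro r
    simp only [hψ₀def, AlgHom.comp_apply, AlgHom.coe_restrictScalars', MvPolynomial.mapAlgHom_apply]
    rfl
  have hJker : ∀ a ∈ J, ψ₀ a = 0 := by
    intro a ha
    rw [hJdef] at ha
    refine Submodule.span_induction (p := fun a _ => ψ₀ a = 0) ?_ (by simp) ?_ ?_ ha
    · rintro _ ⟨p, rfl⟩
      rw [hψ₀, hQ]
      have : (p : MvPolynomial (Fin n) B) ∈ RingHom.ker φ.toRingHom := by
        rw [← hs]; exact Ideal.subset_span p.2
      exact this
    · intro x y _ _ hx hy; rw [map_add, hx, hy, add_zero]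
    · intro r x _ hx; rw [smul_eq_mul, map_mul, hx, mul_zero]
  set ψ : (MvPolynomial (Fin n) (A i₀) ⧸ J) →ₐ[A i₀] E := Ideal.Quotient.liftₐ J ψ₀ hJker
    with hψdef
  -- the forward map
  set Φ : (B ⊗[A i₀] (MvPolynomial (Fin n) (A i₀) ⧸ J)) →ₐ[B] E :=
    Algebra.TensorProduct.lift (Algebra.ofId B E) ψ (fun x y => Commute.all _ _) with hΦdef
  have hΦ : ∀ (b : B) (x : MvPolynomial (Fin n) (A i₀) ⧸ J),
      Φ (b ⊗ₜ x) = algebraMap B E b * ψ x := fun b x =>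
    Algebra.TensorProduct.lift_tmul _ _ _ b x
  -- the reverse map, first on the polynomial ring
  set Ψ₀ : MvPolynomial (Fin n) B →ₐ[B] (B ⊗[A i₀] (MvPolynomial (Fin n) (A i₀) ⧸ J)) :=
    MvPolynomial.aeval (fun j => (1 : B) ⊗ₜ[A i₀] (Ideal.Quotient.mk J (MvPolynomial.X j))) with hΨ₀def
  -- key compatibility: `Ψ₀` maps an image polynomial to the tensor of its preimage
  have hΨ₀map : ∀ r : MvPolynomial (Fin n) (A i₀),
      Ψ₀ (MvPolynomial.map (u i₀) r) = 1 ⊗ₜ (Ideal.Quotient.mk J r) := by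
    have : (Ψ₀.restrictScalars (A i₀)).comp (MvPolynomial.mapAlgHom (Algebra.ofId (A i₀) B)) =
        (Algebra.TensorProduct.includeRight.comp (Ideal.Quotient.mkₐ (A i₀) J)) := by
      apply MvPolynomial.algHom_ext
      intro j
      simp [hΨ₀def]
    intro r
    have h2 := AlgHom.congr_fun this r
    simp at h2; exact h2
  have hs' : Ideal.span ↑s = RingHom.ker φ := hs
  have hkerΨ₀ : ∀ a ∈ RingHom.ker φ, Ψ₀ a = 0 := by
    intro a ha
    rw [← hs'] at ha
    refine Submodule.span_induction (p := fun a _ => Ψ₀ a = 0) ?_ (by simp) ?_ ?_ ha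
    · intro p hp
      have h1 := hΨ₀map (Q ⟨p, hp⟩)
      rw [hQ ⟨p, hp⟩] at h1
      have h2 : Ideal.Quotient.mk J (Q ⟨p, hp⟩) = 0 :=
        Ideal.Quotient.eq_zero_iff_mem.2 (Ideal.subset_span (Set.mem_range_self _))
      rw [h1, h2, TensorProduct.tmul_zero]
    · intro x y _ _ hx hy; rw [map_add, hx, hy, add_zero]
    · intro r x _ hx
      rw [smul_eq_mul, map_mul, hx]
      exact mul_zero (Ψ₀ r)
  set Ψ' : (MvPolynomial (Fin n) B ⧸ RingHom.ker φ) →ₐ[B]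
      (B ⊗[A i₀] (MvPolynomial (Fin n) (A i₀) ⧸ J)) :=
    Ideal.Quotient.liftₐ _ Ψ₀ hkerΨ₀ with hΨ'def
  set e := Ideal.quotientKerAlgEquivOfSurjective hφ with hedef
  set Ψ : E →ₐ[B] (B ⊗[A i₀] (MvPolynomial (Fin n) (A i₀) ⧸ J)) :=
    Ψ'.comp e.symm.toAlgHom with hΨdef
  have hΨφ : ∀ p : MvPolynomial (Fin n) B, Ψ (φ p) = Ψ₀ p := by
    intro p
    have h1 : e.symm (φ p) = Ideal.Quotient.mk _ p := by
      apply e.injective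
      rw [AlgEquiv.apply_symm_apply]
      rfl
    rw [hΨdef, AlgHom.comp_apply, AlgEquiv.toAlgHom_eq_coe, AlgEquiv.coe_algHom, h1]
    rfl
  have key1 : ∀ j : Fin n, Φ (1 ⊗ₜ (Ideal.Quotient.mk J (MvPolynomial.X j))) =
      φ (MvPolynomial.X j) := by
    intro j
    rw [hΦ, map_one, one_mul, hψdef, Ideal.Quotient.liftₐ_apply]
    show ψ₀ (MvPolynomial.X j) = _
    rw [hψ₀]
    simp
  refine Nonempty.intro (AlgEquiv.ofAlgHom Φ Ψ ?_ ?_)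
  · -- Φ ∘ Ψ = id
    have : (Φ.comp Ψ).comp φ = (AlgHom.id B E).comp φ := by
      apply MvPolynomial.algHom_ext
      intro j
      simp only [AlgHom.comp_apply, AlgHom.id_apply]
      rw [hΨφ]
      have : Ψ₀ (MvPolynomial.X j) = 1 ⊗ₜ (Ideal.Quotient.mk J (MvPolynomial.X j)) := by
        simp [hΨ₀def]
      rw [this, key1]
    ext x
    obtain ⟨p, rfl⟩ := hφ x
    exact AlgHom.congr_fun this p
  · -- Ψ ∘ Φ = id
    apply Algebra.TensorProduct.ext
    · ext
    · apply Ideal.Quotient.algHom_ext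
      apply MvPolynomial.algHom_ext
      intro j
      simp only [AlgHom.comp_apply, Ideal.Quotient.mkₐ_eq_mk, AlgHom.coe_restrictScalars',
        Algebra.TensorProduct.includeRight_apply, AlgHom.id_apply]
      rw [key1, hΨφ]
      simp [hΨ₀def]
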